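/- Let B ⊆ 2^ω, let + denote coordinatewise addition mod 2 on 2^ω, and let x, y ∈ 2^ω with x ≠ y. If the intersection (B+x) ∩ (B+y) is finite, then its cardinality is even. -/

import Mathlib

open Classical in
lemma even_card_of_invol {α : Type*} (f : α → α) :
    ∀ (T : Finset α), (∀ z ∈ T, f z ∈ T) → (∀ z ∈ T, f (f z) = z) →
      (∀ z ∈ T, f z ≠ z) → Even T.card := by
  intro T
  induction T using Finset.strongInduction with
  | _ T ih =>
    intro hmem hinv hne
    rcases T.eq_empty_or_nonempty with rfl | ⟨a, ha⟩
    · simp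
    · have hfa : f a ∈ T := hmem a ha
      have hane : f a ≠ a := hne a ha
      set T' : Finset α := T \ {a, f a} with hT'
      have hsub : T' ⊆ T := Finset.sdiff_subset
      have hss : T' ⊂ T := Finset.sdiff_ssubset (by
        intro z hz
        simp only [Finset.mem_insert, Finset.mem_singleton] at hz
        rcases hz with rfl | rfl <;> assumption) ⟨a, by simp⟩
      have hmem' : ∀ z ∈ T', f z ∈ T' := by
        intro z hz
        have hzT := hsub hz
        simp only [hT', Finset.mem_sdiff, Finset.mem_insert, Finset.mem_singleton,
          not_or] at hz ⊢
        refine ⟨hmem z hzT, ?_, ?_⟩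
        · intro h
          exact hz.2.2 (by rw [← h, hinv z hzT])
        · intro h
          have : f (f z) = f (f a) := by rw [h]
          rw [hinv z hzT, hinv a ha] at this
          exact hz.2.1 this
      have heven : Even T'.card :=
        ih T' hss hmem' (fun z hz => hinv z (hsub hz)) (fun z hz => hne z (hsub hz))
      have hcard : T.card = T'.card + 2 := by
        have h2 : ({a, f a} : Finset α) ⊆ T := by
          intro z hz
          simp only [Finset.mem_insert, Finset.mem_singleton] at hz
          rcases hz with rfl | rfl <;> assumption
        have hsd := Finset.card_sdiff_of_subset h2
        have hle := Finset.card_le_card h2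
        have hc2 : ({a, f a} : Finset α).card = 2 := by
          rw [Finset.card_insert_of_notMem (by simpa using hane.symm),
            Finset.card_singleton]
        have hT'c : T'.card = T.card - 2 := by rw [hT', hsd, hc2]
        rw [hc2] at hle
        omega
      rw [hcard]
      obtain ⟨k, hk⟩ := heven
      exact ⟨k + 1, by omega⟩

lemma even_ncard_of_invol {α : Type*} {S : Set α} (hS : S.Finite) (f : α → α)
    (hmem : ∀ z ∈ S, f z ∈ S) (hinv : ∀ z ∈ S, f (f z) = z)
    (hne : ∀ z ∈ S, f z ≠ z) : Even S.ncard := by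
  have : Fintype S := hS.fintype
  rw [Set.ncard_eq_toFinset_card' S]
  exact even_card_of_invol f _ (by simpa using hmem) (by simpa using hinv) (by simpa using hne)

/-- If `x ≠ y` in the Cantor group `2^ω` (coordinatewise addition mod 2) and
`(B+x) ∩ (B+y)` is finite, then its cardinality is even. -/
theorem stmt_2 (B : Set (ℕ → ZMod 2)) (x y : ℕ → ZMod 2) (hxy : x ≠ y)
    (hfin : (((fun b => b + x) '' B) ∩ ((fun b => b + y) '' B)).Finite) :
    Even ((((fun b => b + x) '' B) ∩ ((fun b => b + y) '' B)).ncard) := by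
  have h2 : ∀ z : ℕ → ZMod 2, z + z = 0 := by
    intro z; funext n
    have := CharTwo.add_self_eq_zero (z n)
    simpa using this
  apply even_ncard_of_invol hfin (fun z => z + x + y)
  · rintro z ⟨⟨b, hb, rfl⟩, ⟨b', hb', hb'eq⟩⟩
    constructor
    · exact ⟨b', hb', by rw [← hb'eq]; abel_nf; rw [show x + (y + (b' + y)) = b' + x + (y + y) by abel, h2]; abel⟩
    · exact ⟨b, hb, by abel_nf; rw [show y + (x + (b + x)) = b + y + (x + x) by abel, h2]; abel⟩
  · intro z _
    have : z + x + y + x + y = z + (x + x) + (y + y) := by abel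
    rw [this, h2, h2]; abel
  · intro z _ h
    apply hxy
    have h0 : x + y = 0 := by
      have h' : z + (x + y) = z + 0 := by rw [add_zero, ← add_assoc]; exact h
      exact add_left_cancel h'
    have := congrArg (fun w => x + w) (h2 y)
    calc x = x + (y + y) := by rw [h2 y, add_zero]
    _ = (x + y) + y := by rw [add_assoc]
    _ = y := by rw [h0, zero_add]
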